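/- For the subgroup $U = \{ \begin{pmatrix} e^t & 0 \\ t e^t & e^t \end{pmatrix} : t \in \mathbb{R} \}$ of $GL_2(\mathbb{R})$, the Cartan projection is given explicitly by $\mu\begin{pmatrix} e^t & 0 \\ te^t & e^t \end{pmatrix} = \left( t + \tfrac12 \log\tfrac{t^2+2+\sqrt{t^4+4t^2}}{2},\; t + \tfrac12 \log\tfrac{t^2+2-\sqrt{t^4+4t^2}}{2} \right)$, and for $t > 1$ the second coordinate $y$ satisfies $y < t - \log t$ while the first coordinate $x$ satisfies $x > t + \log t$; in particular $x \ge y + \log y$ for $t$ sufficiently large. -/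

import Mathlib

open Matrix Real

lemma hasEig_of_det (M : Matrix (Fin 2) (Fin 2) ℝ) (μ : ℝ)
    (h : (M - μ • 1).det = 0) :
    Module.End.HasEigenvalue (Matrix.toLin' M) μ := by
  obtain ⟨v, hv, hmv⟩ := Matrix.exists_mulVec_eq_zero_iff.mpr h
  refine Module.End.hasEigenvalue_of_hasEigenvector (x := v) ⟨?_, hv⟩
  rw [Module.End.mem_eigenspace_iff, Matrix.toLin'_apply]
  have h2 : M *ᵥ v - (μ • (1 : Matrix (Fin 2) (Fin 2) ℝ)) *ᵥ v = 0 := by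
    rw [← Matrix.sub_mulVec]; exact hmv
  rw [Matrix.smul_mulVec, Matrix.one_mulVec] at h2
  exact sub_eq_zero.mp h2

-- basic facts about s t = (t^2+2+√D)/2 and r t = (t^2+2-√D)/2
lemma sqrtD_lt (t : ℝ) : Real.sqrt (t ^ 4 + 4 * t ^ 2) < t ^ 2 + 2 := by
  have h : t ^ 4 + 4 * t ^ 2 < (t ^ 2 + 2) ^ 2 := by nlinarith
  calc Real.sqrt (t ^ 4 + 4 * t ^ 2) < Real.sqrt ((t ^ 2 + 2) ^ 2) := by
        apply Real.sqrt_lt_sqrt (by positivity) h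
    _ = t ^ 2 + 2 := Real.sqrt_sq (by positivity)

lemma sq_sqrtD (t : ℝ) : Real.sqrt (t ^ 4 + 4 * t ^ 2) ^ 2 = t ^ 4 + 4 * t ^ 2 :=
  Real.sq_sqrt (by positivity)

lemma s_pos (t : ℝ) : 0 < (t ^ 2 + 2 + Real.sqrt (t ^ 4 + 4 * t ^ 2)) / 2 := by
  have := Real.sqrt_nonneg (t ^ 4 + 4 * t ^ 2); nlinarith

lemma r_pos (t : ℝ) : 0 < (t ^ 2 + 2 - Real.sqrt (t ^ 4 + 4 * t ^ 2)) / 2 := by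
  have := sqrtD_lt t; linarith

lemma Sroot (t : ℝ) :
    ((t ^ 2 + 2 + Real.sqrt (t ^ 4 + 4 * t ^ 2)) / 2) ^ 2 -
      (t ^ 2 + 2) * ((t ^ 2 + 2 + Real.sqrt (t ^ 4 + 4 * t ^ 2)) / 2) + 1 = 0 := by
  linear_combination (1/4) * sq_sqrtD t

lemma Rroot (t : ℝ) :
    ((t ^ 2 + 2 - Real.sqrt (t ^ 4 + 4 * t ^ 2)) / 2) ^ 2 -
      (t ^ 2 + 2) * ((t ^ 2 + 2 - Real.sqrt (t ^ 4 + 4 * t ^ 2)) / 2) + 1 = 0 := by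
  linear_combination (1/4) * sq_sqrtD t

lemma sr_one (t : ℝ) :
    ((t ^ 2 + 2 + Real.sqrt (t ^ 4 + 4 * t ^ 2)) / 2) *
      ((t ^ 2 + 2 - Real.sqrt (t ^ 4 + 4 * t ^ 2)) / 2) = 1 := by
  have := sq_sqrtD t; nlinarith

/-- Cartan projection of `U = {(e^t, 0; t e^t, e^t)}`: `e^{2x(t)}` and `e^{2y(t)}`
(with the explicit formulas below) are the eigenvalues of `gᵀg`, with `y ≤ x`;
for `t > 1` one has `y < t - log t` and `x > t + log t`; and
`x ≥ y + log y` for `t` sufficiently large. -/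
theorem stmt_14 :
    let g : ℝ → Matrix (Fin 2) (Fin 2) ℝ := fun t =>
      !![Real.exp t, 0; t * Real.exp t, Real.exp t]
    let x : ℝ → ℝ := fun t =>
      t + (1 / 2) * Real.log ((t ^ 2 + 2 + Real.sqrt (t ^ 4 + 4 * t ^ 2)) / 2)
    let y : ℝ → ℝ := fun t =>
      t + (1 / 2) * Real.log ((t ^ 2 + 2 - Real.sqrt (t ^ 4 + 4 * t ^ 2)) / 2)
    (∀ t : ℝ,
      Module.End.HasEigenvalue (Matrix.toLin' ((g t)ᵀ * g t)) (Real.exp (2 * x t)) ∧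
      Module.End.HasEigenvalue (Matrix.toLin' ((g t)ᵀ * g t)) (Real.exp (2 * y t)) ∧
      y t ≤ x t) ∧
    (∀ t : ℝ, 1 < t → y t < t - Real.log t ∧ t + Real.log t < x t) ∧
    (∃ T : ℝ, ∀ t ≥ T, y t + Real.log (y t) ≤ x t) := by
  intro g x y
  set S : ℝ → ℝ := fun t => (t ^ 2 + 2 + Real.sqrt (t ^ 4 + 4 * t ^ 2)) / 2 with hS
  set R : ℝ → ℝ := fun t => (t ^ 2 + 2 - Real.sqrt (t ^ 4 + 4 * t ^ 2)) / 2 with hR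
  have hx2 : ∀ t, Real.exp (2 * x t) = Real.exp (2 * t) * S t := fun t => by
    have : 2 * x t = 2 * t + Real.log (S t) := by simp only [x]; ring
    rw [this, Real.exp_add, Real.exp_log (s_pos t)]
  have hy2 : ∀ t, Real.exp (2 * y t) = Real.exp (2 * t) * R t := fun t => by
    have : 2 * y t = 2 * t + Real.log (R t) := by simp only [y]; ring
    rw [this, Real.exp_add, Real.exp_log (r_pos t)]
  have hM : ∀ t, (g t)ᵀ * g t =
      !![Real.exp (2*t) * (1 + t^2), t * Real.exp (2*t);
         t * Real.exp (2*t), Real.exp (2*t)] := fun t => by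
    have he : Real.exp (2*t) = Real.exp t * Real.exp t := by
      rw [← Real.exp_add]; ring_nf
    have hgT : (g t)ᵀ = !![Real.exp t, t * Real.exp t; 0, Real.exp t] := by
      ext i j; fin_cases i <;> fin_cases j <;> simp [g]
    rw [hgT]
    ext i j
    fin_cases i <;> fin_cases j <;>
      simp [g, Matrix.mul_apply, Fin.sum_univ_two, he] <;> ring
  have hdet : ∀ t (c : ℝ), 0 < c → c^2 - (t^2+2)*c + 1 = 0 →
      ((g t)ᵀ * g t - (Real.exp (2*t) * c) • 1).det = 0 := by
    intro t c hc hroot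
    rw [hM t]
    have h1 : (!![Real.exp (2*t) * (1 + t^2), t * Real.exp (2*t);
         t * Real.exp (2*t), Real.exp (2*t)] - (Real.exp (2*t) * c) • 1 :
         Matrix (Fin 2) (Fin 2) ℝ) =
        !![Real.exp (2*t) * (1 + t^2) - Real.exp (2*t) * c, t * Real.exp (2*t);
           t * Real.exp (2*t), Real.exp (2*t) - Real.exp (2*t) * c] := by
      ext i j; fin_cases i <;> fin_cases j <;> simp [Matrix.one_apply]
    rw [h1, Matrix.det_fin_two_of]
    nlinarith [Real.exp_pos (2*t), sq_nonneg (Real.exp (2*t))]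
  have hSroot : ∀ t, (S t)^2 - (t^2+2)*(S t) + 1 = 0 := fun t => Sroot t
  have hRroot : ∀ t, (R t)^2 - (t^2+2)*(R t) + 1 = 0 := fun t => Rroot t
  have hyx : ∀ t, y t ≤ x t := fun t => by
    have : R t ≤ S t := by
      have := Real.sqrt_nonneg (t ^ 4 + 4 * t ^ 2); simp only [S, R]; linarith
    have := Real.log_le_log (r_pos t) this
    simp only [x, y]; linarith
  -- for t > 1 : t^2 < S t
  have hSgt : ∀ t, 1 < t → t^2 < S t := by
    intro t ht
    have hD : t^2 - 2 < Real.sqrt (t ^ 4 + 4 * t ^ 2) := by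
      by_contra hcon
      push_neg at hcon
      nlinarith [sq_sqrtD t, Real.sqrt_nonneg (t ^ 4 + 4 * t ^ 2)]
    simp only [S]; linarith
  have hlogS : ∀ t, 1 < t → 2 * Real.log t < Real.log (S t) := by
    intro t ht
    have h1 : Real.log (t^2) < Real.log (S t) :=
      Real.log_lt_log (by positivity) (hSgt t ht)
    rw [Real.log_pow] at h1; push_cast at h1; linarith
  have hlogR : ∀ t, Real.log (R t) = - Real.log (S t) := by
    intro t
    have : R t = (S t)⁻¹ := by
      field_simp
      rw [eq_div_iff (ne_of_gt (s_pos t) : S t ≠ 0), mul_comm]; exact sr_one t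
    rw [this, Real.log_inv]
  refine ⟨fun t => ⟨?_, ?_, hyx t⟩, fun t ht => ?_, ⟨2, fun t ht => ?_⟩⟩
  · rw [hx2 t]; exact hasEig_of_det _ _ (hdet t (S t) (s_pos t) (hSroot t))
  · rw [hy2 t]; exact hasEig_of_det _ _ (hdet t (R t) (r_pos t) (hRroot t))
  · have h1 := hlogS t ht
    have h2 := hlogR t
    constructor
    · show t + (1/2) * Real.log (R t) < t - Real.log t
      rw [h2]; linarith
    · show t + Real.log t < t + (1/2) * Real.log (S t)
      linarith
  · -- t ≥ 2
    have ht1 : (1:ℝ) < t := by linarith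
    have hSt : t^2 < S t := hSgt t ht1
    have hSlt : S t < t^2 + 2 := by
      have := sqrtD_lt t; simp only [S]; linarith
    -- S t < exp (2t)
    have hexp : t + 1 ≤ Real.exp t := Real.add_one_le_exp t
    have hSexp : S t < Real.exp (2*t) := by
      have : Real.exp (2*t) = Real.exp t * Real.exp t := by
        rw [← Real.exp_add]; ring_nf
      nlinarith
    have hlogS2t : Real.log (S t) < 2 * t := by
      have := Real.log_lt_log (s_pos t) hSexp
      rwa [Real.log_exp] at this
    have hypos : 0 < y t := by
      show 0 < t + (1/2) * Real.log (R t)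
      rw [hlogR t]; linarith
    have hyltS : y t ≤ S t := by
      show t + (1/2) * Real.log (R t) ≤ S t
      rw [hlogR t]
      have hlogpos : 0 < Real.log (S t) :=
        Real.log_pos (by nlinarith)
      nlinarith
    have hlog : Real.log (y t) ≤ Real.log (S t) := Real.log_le_log hypos hyltS
    have hxy : x t - y t = Real.log (S t) := by
      show (t + (1/2) * Real.log (S t)) - (t + (1/2) * Real.log (R t)) = _
      rw [hlogR t]; ring
    linarith
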